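/- Let H be an r-uniform hypergraph with n > 2r vertices and m ≤ n − r edges, m ≥ 2. Then the number of null versals of H satisfies |Z'(H)| ≥ m · 2^{n − m − r + 1}, and consequently |Z'(H)| ≥ n + 1. -/

import Mathlib

lemma aux_pow_stmt9 (m d : ℕ) (h1 : 1 ≤ m) : m + d ≤ m * 2 ^ d := by
  induction d with
  | zero => simp
  | succ d ih =>
    have h2 : 0 < m * 2 ^ d := Nat.mul_pos h1 (Nat.pow_pos (by norm_num))
    calc m + (d + 1) = (m + d) + 1 := rfl
      _ ≤ m * 2 ^ d + m * 2 ^ d := Nat.add_le_add ih h2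
      _ = m * 2 ^ (d + 1) := by ring

/-- Case II.a: if `H` is `r`-uniform with `n > 2r` vertices and `2 ≤ m ≤ n - r` edges,
then `|Z'(H)| ≥ m · 2 ^ (n - m - r + 1) ≥ n + 1`. -/
theorem stmt_9 {V : Type*} [Fintype V] [DecidableEq V] (E : Finset (Finset V)) (r n m : ℕ)
    (hn : n = Fintype.card V) (hm : m = E.card)
    (hunif : ∀ e ∈ E, e.card = r)
    (hanti : ∀ e ∈ E, ∀ f ∈ E, e ⊆ f → e = f)
    (hn2r : 2 * r < n) (hm2 : 2 ≤ m) (hmn : m ≤ n - r) :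
    m * 2 ^ (n - m - r + 1) ≤
      {S : Finset V | ∃ e ∈ E, S ⊆ eᶜ ∧ ∀ f ∈ E, f ≠ e → (S ∩ f).Nonempty}.ncard ∧
    n + 1 ≤
      {S : Finset V | ∃ e ∈ E, S ⊆ eᶜ ∧ ∀ f ∈ E, f ≠ e → (S ∩ f).Nonempty}.ncard := by
  classical
  set Ze : Finset V → Finset (Finset V) :=
    fun e => Finset.univ.filter
      (fun S => S ⊆ eᶜ ∧ ∀ f ∈ E, f ≠ e → (S ∩ f).Nonempty) with hZe
  have hmemZ : ∀ e S, S ∈ Ze e ↔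
      (S ⊆ eᶜ ∧ ∀ f ∈ E, f ≠ e → (S ∩ f).Nonempty) := by
    intro e S; simp [hZe]
  have hPeq : {S : Finset V | ∃ e ∈ E, S ⊆ eᶜ ∧ ∀ f ∈ E, f ≠ e → (S ∩ f).Nonempty}
      = ↑(E.biUnion Ze) := by
    ext S
    simp only [Set.mem_setOf_eq, Finset.coe_biUnion, Set.mem_iUnion, Finset.mem_coe]
    constructor
    · rintro ⟨e, he, h1, h2⟩; exact ⟨e, he, (hmemZ e S).2 ⟨h1, h2⟩⟩
    · rintro ⟨e, he, hS⟩; exact ⟨e, he, (hmemZ e S).1 hS⟩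
  have hdisj : ∀ e ∈ E, ∀ f ∈ E, e ≠ f → Disjoint (Ze e) (Ze f) := by
    intro e he f hf hef
    rw [Finset.disjoint_left]
    intro S hSe hSf
    obtain ⟨h1, _⟩ := (hmemZ e S).1 hSe
    obtain ⟨_, h4⟩ := (hmemZ f S).1 hSf
    obtain ⟨x, hx⟩ := h4 e he hef
    have hxS : x ∈ S := Finset.mem_of_mem_inter_left hx
    have hxe : x ∈ e := Finset.mem_of_mem_inter_right hx
    exact absurd hxe (by simpa using h1 hxS)
  have hcard : ∀ e ∈ E, 2 ^ (n - m - r + 1) ≤ (Ze e).card := by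
    intro e he
    have hex : ∀ f ∈ E.erase e, (f \ e).Nonempty := by
      intro f hf
      rw [Finset.sdiff_nonempty]
      intro hsub
      exact (Finset.mem_erase.1 hf).1 (hanti f (Finset.mem_erase.1 hf).2 e he hsub)
    set B : Finset V := (E.erase e).attach.image (fun f => (hex f.1 f.2).choose) with hB
    have hBsub : B ⊆ eᶜ := by
      intro b hb
      rw [hB, Finset.mem_image] at hb
      obtain ⟨⟨f, hf⟩, _, hfb⟩ := hb
      have := (hex f hf).choose_spec
      rw [Finset.mem_sdiff] at this
      rw [Finset.mem_compl]
      rw [← hfb]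
      exact this.2
    have hBhit : ∀ f ∈ E, f ≠ e → (B ∩ f).Nonempty := by
      intro f hf hfe
      have hf' : f ∈ E.erase e := Finset.mem_erase.2 ⟨hfe, hf⟩
      refine ⟨(hex f hf').choose, Finset.mem_inter.2 ⟨?_, ?_⟩⟩
      · rw [hB, Finset.mem_image]
        exact ⟨⟨f, hf'⟩, Finset.mem_attach _ _, rfl⟩
      · have := (hex f hf').choose_spec
        rw [Finset.mem_sdiff] at this
        exact this.1
    have hBcard : B.card ≤ m - 1 := by
      calc B.card ≤ (E.erase e).attach.card := Finset.card_image_le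
        _ = (E.erase e).card := Finset.card_attach
        _ = m - 1 := by rw [Finset.card_erase_of_mem he, hm]
    -- map supersets of B inside eᶜ into Ze e
    have hmap : ∀ A ∈ (eᶜ \ B).powerset, B ∪ A ∈ Ze e := by
      intro A hA
      rw [Finset.mem_powerset] at hA
      rw [hmemZ]
      constructor
      · intro x hx
        rcases Finset.mem_union.1 hx with h | h
        · exact hBsub h
        · exact (Finset.sdiff_subset) (hA h)
      · intro f hf hfe
        obtain ⟨x, hx⟩ := hBhit f hf hfe
        rw [Finset.mem_inter] at hx
        exact ⟨x, Finset.mem_inter.2 ⟨Finset.mem_union_left _ hx.1, hx.2⟩⟩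
    have hinj : Set.InjOn (fun A => B ∪ A) ((eᶜ \ B).powerset : Set (Finset V)) := by
      intro A1 h1 A2 h2 heq
      simp only [Finset.coe_powerset, Set.mem_preimage, Set.mem_powerset_iff,
        Finset.coe_subset] at h1 h2
      have d1 : Disjoint B A1 := by
        refine Finset.disjoint_left.2 fun x hxB hxA => ?_
        have := h1 hxA
        rw [Finset.mem_sdiff] at this
        exact this.2 hxB
      have d2 : Disjoint B A2 := by
        refine Finset.disjoint_left.2 fun x hxB hxA => ?_
        have := h2 hxA
        rw [Finset.mem_sdiff] at this
        exact this.2 hxB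
      have : (B ∪ A1) \ B = (B ∪ A2) \ B := congrArg (· \ B) heq
      rwa [Finset.union_sdiff_cancel_left d1, Finset.union_sdiff_cancel_left d2] at this
    have hle : (eᶜ \ B).powerset.card ≤ (Ze e).card :=
      Finset.card_le_card_of_injOn _ hmap hinj
    have hcompl : (eᶜ : Finset V).card = n - r := by
      rw [Finset.card_compl, hunif e he, hn]
    have hsd : (eᶜ \ B).card = (n - r) - B.card := by
      rw [Finset.card_sdiff_of_subset hBsub, hcompl]
    have hexp : n - m - r + 1 ≤ (eᶜ \ B).card := by
      rw [hsd]; omega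
    calc 2 ^ (n - m - r + 1) ≤ 2 ^ ((eᶜ \ B).card) :=
          Nat.pow_le_pow_right (by norm_num) hexp
      _ = (eᶜ \ B).powerset.card := (Finset.card_powerset _).symm
      _ ≤ (Ze e).card := hle
  have hncard : {S : Finset V | ∃ e ∈ E, S ⊆ eᶜ ∧ ∀ f ∈ E, f ≠ e → (S ∩ f).Nonempty}.ncard
      = ∑ e ∈ E, (Ze e).card := by
    rw [hPeq, Set.ncard_coe_finset, Finset.card_biUnion hdisj]
  have hmain : m * 2 ^ (n - m - r + 1) ≤
      {S : Finset V | ∃ e ∈ E, S ⊆ eᶜ ∧ ∀ f ∈ E, f ≠ e → (S ∩ f).Nonempty}.ncard := by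
    rw [hncard]
    calc m * 2 ^ (n - m - r + 1) = ∑ _e ∈ E, 2 ^ (n - m - r + 1) := by
          rw [Finset.sum_const, hm, smul_eq_mul]
      _ ≤ ∑ e ∈ E, (Ze e).card := Finset.sum_le_sum hcard
  refine ⟨hmain, le_trans ?_ hmain⟩
  have hd : n - m - r + 1 = ((n - r) - m) + 1 := by omega
  have h4 : n - r ≤ m * 2 ^ ((n - r) - m) := by
    have := aux_pow_stmt9 m ((n - r) - m) (by omega)
    omega
  calc n + 1 ≤ 2 * (n - r) := by omega
    _ ≤ 2 * (m * 2 ^ ((n - r) - m)) := Nat.mul_le_mul_left 2 h4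
    _ = m * 2 ^ ((n - r) - m + 1) := by ring
    _ = m * 2 ^ (n - m - r + 1) := by rw [hd]
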